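/- For integers v ≥ 2, m ≥ 1 and s with ⌈2v·log v / m⌉ ≤ s ≤ v − m, the inequality C(v,2)·C(v−m, s) < C(v, s) holds, where C denotes the binomial coefficient and log is the natural logarithm. -/

import Mathlib

open Finset Nat

private lemma choose_swap {v s m : ℕ} (h : s + m ≤ v) :
    v.choose s * (v - s).choose m = v.choose m * (v - m).choose s := by
  have hs : s ≤ v := le_trans (Nat.le_add_right _ _) h
  have hm : m ≤ v := le_trans (Nat.le_add_left _ _) h
  have h1 : m ≤ v - s := by omega
  have h2 : s ≤ v - m := by omega
  have e1 := Nat.choose_mul_factorial_mul_factorial hs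
  have e2 := Nat.choose_mul_factorial_mul_factorial h1
  have e3 := Nat.choose_mul_factorial_mul_factorial hm
  have e4 := Nat.choose_mul_factorial_mul_factorial h2
  have hvs : v - s - m = v - (s + m) := by omega
  have hvm : v - m - s = v - (s + m) := by omega
  rw [hvs] at e2; rw [hvm] at e4
  have key : v.choose s * (v - s).choose m * (s ! * m ! * (v - (s + m))!) =
      v.choose m * (v - m).choose s * (s ! * m ! * (v - (s + m))!) := by
    have l1 : v.choose s * (v - s).choose m * (s ! * m ! * (v - (s + m))!) = v ! := by
      calc v.choose s * (v - s).choose m * (s ! * m ! * (v - (s + m))!)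
          = (v.choose s * s ! * ((v - s).choose m * m ! * (v - (s + m))!)) := by ring
        _ = v.choose s * s ! * (v - s)! := by rw [e2]
        _ = v ! := e1
    have l2 : v.choose m * (v - m).choose s * (s ! * m ! * (v - (s + m))!) = v ! := by
      calc v.choose m * (v - m).choose s * (s ! * m ! * (v - (s + m))!)
          = (v.choose m * m ! * ((v - m).choose s * s ! * (v - (s + m))!)) := by ring
        _ = v.choose m * m ! * (v - m)! := by rw [e4]
        _ = v ! := e3
    rw [l1, l2]
  exact Nat.eq_of_mul_eq_mul_right (by positivity) key

private lemma desc_bound {v s m : ℕ} (h : s + m ≤ v) :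
    (v - s).choose m * v ^ m ≤ v.choose m * (v - s) ^ m := by
  have key : (v - s).descFactorial m * v ^ m ≤ v.descFactorial m * (v - s) ^ m := by
    have hv1 : v ^ m = ∏ _i ∈ range m, v := by rw [Finset.prod_const, Finset.card_range]
    have hv2 : (v - s) ^ m = ∏ _i ∈ range m, (v - s) := by
      rw [Finset.prod_const, Finset.card_range]
    rw [Nat.descFactorial_eq_prod_range, Nat.descFactorial_eq_prod_range, hv1, hv2,
      ← Finset.prod_mul_distrib, ← Finset.prod_mul_distrib]
    apply Finset.prod_le_prod'
    intro i hi
    simp only [Finset.mem_range] at hi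
    have hi' : s + i < v := by omega
    have h1 : v - s - i = v - s - i := rfl
    nlinarith [Nat.sub_add_cancel (le_of_lt hi'), Nat.sub_add_cancel (show s ≤ v by omega),
      Nat.sub_add_cancel (show i ≤ v by omega),
      (show v - s - i + (s + i) = v by omega)]
  have e1 := Nat.descFactorial_eq_factorial_mul_choose (v - s) m
  have e2 := Nat.descFactorial_eq_factorial_mul_choose v m
  rw [e1, e2] at key
  have : m ! * ((v - s).choose m * v ^ m) ≤ m ! * (v.choose m * (v - s) ^ m) := by
    calc m ! * ((v - s).choose m * v ^ m) = m ! * (v - s).choose m * v ^ m := by ring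
      _ ≤ m ! * v.choose m * (v - s) ^ m := key
      _ = m ! * (v.choose m * (v - s) ^ m) := by ring
  exact Nat.le_of_mul_le_mul_left this (Nat.factorial_pos m)

theorem stmt_5 (v m s : ℕ) (hv : 2 ≤ v) (hm : 1 ≤ m)
    (hs₁ : ⌈(2 * (v : ℝ) * Real.log v) / m⌉₊ ≤ s) (hs₂ : s ≤ v - m) :
    v.choose 2 * (v - m).choose s < v.choose s := by
  -- basic facts
  have hv1 : (1 : ℝ) < v := by exact_mod_cast (by omega : 1 < v)
  have hvpos : (0 : ℝ) < v := by linarith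
  have hlog : 0 < Real.log v := Real.log_pos hv1
  have hmpos : (0 : ℝ) < m := by exact_mod_cast hm
  have hx : (0 : ℝ) < 2 * (v : ℝ) * Real.log v / m := by positivity
  have hs0 : 1 ≤ s := by
    have := Nat.ceil_pos.mpr hx
    omega
  have hsum : s + m ≤ v := by omega
  have hsv : s ≤ v := by omega
  have hmv : m ≤ v := by omega
  have hsm : m ≤ v - s := by omega
  -- real bound: s ≥ 2 v log v / m
  have hsreal : 2 * (v : ℝ) * Real.log v / m ≤ s := by
    have := Nat.ceil_le.mp (le_refl (⌈(2 * (v : ℝ) * Real.log v) / m⌉₊))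
    calc 2 * (v : ℝ) * Real.log v / m ≤ (⌈(2 * (v : ℝ) * Real.log v) / m⌉₊ : ℝ) :=
          Nat.le_ceil _
      _ ≤ s := by exact_mod_cast hs₁
  -- key real inequality: C(v,2) * C(v-s,m) < C(v,m)
  have key : v.choose 2 * (v - s).choose m < v.choose m := by
    have hd := desc_bound hsum
    -- cast to ℝ
    have hdR : ((v - s).choose m : ℝ) * (v : ℝ) ^ m ≤ (v.choose m : ℝ) * ((v : ℝ) - s) ^ m := by
      have := (Nat.cast_le (α := ℝ)).mpr hd
      push_cast [Nat.cast_sub hsv] at this ⊢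
      convert this using 2
    -- (v - s)^m ≤ v^m * exp(-(s*m/v)) ≤ v^m / v^2
    have hexp1 : ((v : ℝ) - s) ≤ v * Real.exp (-(s / v)) := by
      have h1 : (1 : ℝ) - s / v ≤ Real.exp (-(s / v)) := by
        have := Real.add_one_le_exp (-(s / v : ℝ))
        linarith
      have : (v : ℝ) * (1 - s / v) ≤ v * Real.exp (-(s / v)) := by
        apply mul_le_mul_of_nonneg_left h1 (le_of_lt hvpos)
      calc ((v : ℝ) - s) = v * (1 - s / v) := by field_simp
        _ ≤ _ := this
    have hvs_nonneg : (0 : ℝ) ≤ (v : ℝ) - s := by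
      have : (s : ℝ) ≤ v := by exact_mod_cast hsv
      linarith
    have hexp2 : ((v : ℝ) - s) ^ m ≤ (v : ℝ) ^ m * Real.exp (-(s / v)) ^ m := by
      calc ((v : ℝ) - s) ^ m ≤ (v * Real.exp (-(s / v))) ^ m :=
            pow_le_pow_left₀ hvs_nonneg hexp1 m
        _ = (v : ℝ) ^ m * Real.exp (-(s / v)) ^ m := mul_pow _ _ _
    have hexp3 : Real.exp (-(s / v : ℝ)) ^ m ≤ ((v : ℝ) ^ 2)⁻¹ := by
      rw [← Real.exp_nat_mul]
      have harg : (m : ℝ) * (-(s / v)) ≤ -(2 * Real.log v) := by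
        rw [div_le_iff₀ hmpos] at hsreal
        have h1 : 2 * Real.log v ≤ (m : ℝ) * s / v := by
          rw [le_div_iff₀ hvpos]; nlinarith
        have h2 : (m : ℝ) * (-(s / v)) = -((m : ℝ) * s / v) := by ring
        rw [h2]; linarith
      calc Real.exp ((m : ℝ) * (-(s / v))) ≤ Real.exp (-(2 * Real.log v)) :=
            Real.exp_le_exp.mpr harg
        _ = ((v : ℝ) ^ 2)⁻¹ := by
            rw [Real.exp_neg, show (2 : ℝ) * Real.log v = Real.log (v ^ 2) by
              rw [Real.log_pow]; push_cast; ring, Real.exp_log (by positivity)]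
    -- combine: C(v-s,m) ≤ C(v,m) / v^2
    have hT : ((v - s).choose m : ℝ) ≤ (v.choose m : ℝ) * ((v : ℝ) ^ 2)⁻¹ := by
      have hvm_pos : (0 : ℝ) < (v : ℝ) ^ m := by positivity
      rw [← mul_le_mul_iff_of_pos_right hvm_pos]
      calc ((v - s).choose m : ℝ) * (v : ℝ) ^ m ≤ (v.choose m : ℝ) * ((v : ℝ) - s) ^ m := hdR
        _ ≤ (v.choose m : ℝ) * ((v : ℝ) ^ m * Real.exp (-(s / v)) ^ m) := by
            apply mul_le_mul_of_nonneg_left hexp2 (Nat.cast_nonneg _)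
        _ ≤ (v.choose m : ℝ) * ((v : ℝ) ^ m * ((v : ℝ) ^ 2)⁻¹) := by
            apply mul_le_mul_of_nonneg_left _ (Nat.cast_nonneg _)
            exact mul_le_mul_of_nonneg_left hexp3 (le_of_lt hvm_pos)
        _ = (v.choose m : ℝ) * ((v : ℝ) ^ 2)⁻¹ * (v : ℝ) ^ m := by ring
    -- C(v,2) < v^2
    have hC2 : (v.choose 2 : ℝ) < (v : ℝ) ^ 2 := by
      rw [Nat.cast_choose_two]
      nlinarith
    have hRpos : (0 : ℝ) < (v.choose m : ℝ) := by
      exact_mod_cast Nat.choose_pos hmv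
    have : (v.choose 2 : ℝ) * ((v - s).choose m : ℝ) < (v.choose m : ℝ) := by
      calc (v.choose 2 : ℝ) * ((v - s).choose m : ℝ)
          ≤ (v.choose 2 : ℝ) * ((v.choose m : ℝ) * ((v : ℝ) ^ 2)⁻¹) := by
            apply mul_le_mul_of_nonneg_left hT (Nat.cast_nonneg _)
        _ < (v : ℝ) ^ 2 * ((v.choose m : ℝ) * ((v : ℝ) ^ 2)⁻¹) := by
            apply mul_lt_mul_of_pos_right hC2
            positivity
        _ = v.choose m := by field_simp
    exact_mod_cast this
  -- finish: multiply goal by C(v,m) and use the swap identity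
  have hPpos : 0 < v.choose s := Nat.choose_pos hsv
  have hRpos : 0 < v.choose m := Nat.choose_pos hmv
  have swap := choose_swap hsum
  have main : v.choose 2 * (v - m).choose s * v.choose m < v.choose s * v.choose m := by
    calc v.choose 2 * (v - m).choose s * v.choose m
        = v.choose 2 * (v.choose m * (v - m).choose s) := by ring
      _ = v.choose 2 * (v.choose s * (v - s).choose m) := by rw [← swap]
      _ = (v.choose 2 * (v - s).choose m) * v.choose s := by ring
      _ < v.choose m * v.choose s := by
          exact Nat.mul_lt_mul_of_lt_of_le key (le_refl _) hPpos
      _ = v.choose s * v.choose m := by ring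
  exact Nat.lt_of_mul_lt_mul_right main
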